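/- Let A be a commutative unital ring and B a left noetherian associative unital A-algebra. Suppose condition (E) holds: for every simple left module M over the polynomial ring B[X], the B[X]-linear endomorphism φ : M → M, φ(m) = X·m, is integral over A, i.e., there exist n ≥ 1 and z₀, …, z_{n−1} ∈ A with φⁿ + z_{n−1}φ^{n−1} + ⋯ + z₀ = 0 in End(M), where A acts on endomorphisms through the A-module structure of M. Then the Jacobson radical of B equals the Baer radical of B. -/

import Mathlib

open Polynomial

/-- A two-sided ideal `P` of `B` is prime if `P ≠ B` and for all two-sided ideals
`J₁, J₂` with `J₁J₂ ⊆ P` one has `J₁ ⊆ P` or `J₂ ⊆ P`. -/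
def TwoSidedIdeal.IsPrimeIdeal {B : Type} [Ring B] (P : TwoSidedIdeal B) : Prop :=
  P ≠ ⊤ ∧ ∀ J₁ J₂ : TwoSidedIdeal B,
    (∀ a ∈ J₁, ∀ b ∈ J₂, a * b ∈ P) → J₁ ≤ P ∨ J₂ ≤ P

section Aux

variable {B : Type} [Ring B]

/-- An element killing all simple left modules is left quasi-regular. -/
lemma aux_quasiReg (j : B)
    (hj : ∀ (M : Type) [AddCommGroup M] [Module B M],
      IsSimpleModule B M → ∀ m : M, j • m = 0) :
    ∃ u : B, u * (1 - j) = 1 := by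
  by_contra h
  push_neg at h
  have h1 : Ideal.span {(1 : B) - j} ≠ ⊤ := by
    intro ht
    have h2 : (1 : B) ∈ Ideal.span {(1 : B) - j} := by rw [ht]; exact Submodule.mem_top
    obtain ⟨u, hu⟩ := Submodule.mem_span_singleton.1 h2
    exact h u (by simpa [smul_eq_mul] using hu)
  obtain ⟨L, hL, hle⟩ := Ideal.exists_le_maximal _ h1
  haveI hsimp : IsSimpleModule B (B ⧸ L) := isSimpleModule_iff_isCoatom.2 hL.out
  have h2 := hj (B ⧸ L) hsimp (Submodule.Quotient.mk (1 : B))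
  have hjL : j ∈ L := by
    have h3 : (Submodule.Quotient.mk (j • (1 : B)) : B ⧸ L) = 0 := by
      rw [Submodule.Quotient.mk_smul]; exact h2
    rw [smul_eq_mul, mul_one] at h3
    exact (Submodule.Quotient.mk_eq_zero _).1 h3
  have h1L : (1 : B) ∈ L := by
    have h4 : (1 : B) - j ∈ L := hle (Ideal.subset_span rfl)
    have := L.add_mem h4 hjL
    simpa using this
  exact hL.ne_top ((Ideal.eq_top_iff_one _).2 h1L)

variable {A : Type} [CommRing A] [Algebra A B]

/-- Under condition (E), an element killing all simple `B`-modules kills all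
simple `B[X]`-modules as well. -/
lemma aux_kills_poly_simple
    (hE : ∀ (M : Type) [AddCommGroup M] [Module (Polynomial B) M],
      IsSimpleModule (Polynomial B) M →
      ∃ n : ℕ, 1 ≤ n ∧ ∃ z : Fin n → A, ∀ m : M,
        ((X : Polynomial B) ^ n
          + ∑ i : Fin n, C (algebraMap A B (z i)) * X ^ (i : ℕ)) • m = 0)
    (a : B)
    (ha : ∀ (M : Type) [AddCommGroup M] [Module B M],
        IsSimpleModule B M → ∀ m : M, a • m = 0)
    (M : Type) [AddCommGroup M] [Module (Polynomial B) M]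
    (hM : IsSimpleModule (Polynomial B) M) (m : M) : (C a : Polynomial B) • m = 0 := by
  classical
  letI : Module B M := Module.compHom M (C : B →+* Polynomial B)
  have hsmul : ∀ (b : B) (x : M), b • x = (C b : Polynomial B) • x := fun _ _ => rfl
  set Jset : Set B := {c | ∀ (N : Type) [AddCommGroup N] [Module B N],
    IsSimpleModule B N → ∀ x : N, c • x = 0} with hJset
  have haJ : a ∈ Jset := ha
  have hJ0 : (0 : B) ∈ Jset := by intro N _ _ _ x; simp
  have hJadd : ∀ c d : B, c ∈ Jset → d ∈ Jset → c + d ∈ Jset := by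
    intro c d hc hd N _ _ hN x
    rw [add_smul, hc N hN x, hd N hN x, add_zero]
  have hJmulR : ∀ c b : B, c ∈ Jset → c * b ∈ Jset := by
    intro c b hc N _ _ hN x
    rw [mul_smul, hc N hN _]
  -- the set of `Jset`-combinations
  set Tc : Set M := {x | ∃ l : List (B × M), (∀ q ∈ l, q.1 ∈ Jset) ∧
      x = (l.map fun q => q.1 • q.2).sum} with hTc
  have hTadd : ∀ x y : M, x ∈ Tc → y ∈ Tc → x + y ∈ Tc := by
    rintro x y ⟨l₁, hl₁, rfl⟩ ⟨l₂, hl₂, rfl⟩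
    refine ⟨l₁ ++ l₂, ?_, by rw [List.map_append, List.sum_append]⟩
    intro q hq
    rcases List.mem_append.1 hq with h | h
    · exact hl₁ q h
    · exact hl₂ q h
  have hT0 : (0 : M) ∈ Tc := ⟨[], by simp, by simp⟩
  have hTX : ∀ x : M, x ∈ Tc → (X : Polynomial B) • x ∈ Tc := by
    rintro x ⟨l, hl, rfl⟩
    refine ⟨l.map fun q => (q.1, (X : Polynomial B) • q.2), ?_, ?_⟩
    · intro q hq
      obtain ⟨q', hq', rfl⟩ := List.mem_map.1 hq
      exact hl q' hq'
    · rw [List.smul_sum, List.map_map, List.map_map]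
      congr 1
      apply List.map_congr_left
      intro q _
      show (X : Polynomial B) • (q.1 • q.2) = q.1 • ((X : Polynomial B) • q.2)
      rw [hsmul, hsmul, ← mul_smul, ← mul_smul, X_mul]
  have hTB : ∀ (b : B) (x : M), x ∈ Tc → b • x ∈ Tc := by
    rintro b x ⟨l, hl, rfl⟩
    refine ⟨l.map fun q => (b * q.1, q.2), ?_, ?_⟩
    · intro q hq
      obtain ⟨q', hq', rfl⟩ := List.mem_map.1 hq
      intro N _ _ hN x
      rw [mul_smul, hl q' hq' N hN, smul_zero]
    · rw [List.smul_sum, List.map_map, List.map_map]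
      congr 1
      apply List.map_congr_left
      intro q _
      show b • (q.1 • q.2) = (b * q.1) • q.2
      rw [mul_smul]
  have hTXpow : ∀ (k : ℕ) (x : M), x ∈ Tc → ((X : Polynomial B) ^ k) • x ∈ Tc := by
    intro k
    induction k with
    | zero => intro x hx; simpa using hx
    | succ k ih =>
      intro x hx
      have : ((X : Polynomial B) ^ (k + 1)) • x
          = (X : Polynomial B) • (((X : Polynomial B) ^ k) • x) := by
        rw [← mul_smul, ← pow_succ']
      rw [this]
      exact hTX _ (ih x hx)
  -- Tc is a B[X]-submodule
  set T' : Submodule (Polynomial B) M :=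
    { carrier := Tc
      add_mem' := fun hx hy => hTadd _ _ hx hy
      zero_mem' := hT0
      smul_mem' := by
        intro p x hx
        induction p using Polynomial.induction_on' with
        | add p q hp hq => rw [add_smul]; exact hTadd _ _ hp hq
        | monomial n b =>
          rw [← C_mul_X_pow_eq_monomial, mul_smul]
          exact hTB b _ (hTXpow n x hx) } with hT'
  haveI := hM
  obtain hT | hT := eq_bot_or_eq_top T'
  · have hmem : (C a : Polynomial B) • m ∈ T' := by
      refine ⟨[(a, m)], ?_, by simp [hsmul]⟩
      intro q hq
      rw [List.mem_singleton] at hq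
      rw [hq]
      exact haJ
    rw [hT] at hmem
    simpa using hmem
  -- Contradiction in the T' = ⊤ case.
  exfalso
  have hs : ∀ x : M, x ∈ Tc := by
    intro x
    have : x ∈ T' := by rw [hT]; exact Submodule.mem_top
    exact this
  haveI : Nontrivial M := IsSimpleModule.nontrivial (Polynomial B) M
  obtain ⟨m₀, hm₀ne⟩ := exists_ne (0 : M)
  obtain ⟨n, hn1, z, hz⟩ := hE M hM
  set N₀ : Submodule B M :=
    Submodule.span B (Set.range fun i : Fin n => ((X : Polynomial B) ^ (i : ℕ)) • m₀) with hN₀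
  have hA : ∀ k : ℕ, ((X : Polynomial B) ^ k) • m₀ ∈ N₀ := by
    intro k
    induction k using Nat.strong_induction_on with
    | _ k ih =>
      rcases lt_or_ge k n with hk | hk
      · exact Submodule.subset_span ⟨⟨k, hk⟩, rfl⟩
      · have e0 := hz m₀
        rw [add_smul, Finset.sum_smul] at e0
        have e1 : ((X : Polynomial B) ^ n) • m₀
            = -∑ i : Fin n, (C (algebraMap A B (z i)) * X ^ (i : ℕ)) • m₀ :=
          eq_neg_of_add_eq_zero_left e0
        have e2 : ((X : Polynomial B) ^ k) • m₀
            = ((X : Polynomial B) ^ (k - n)) • (((X : Polynomial B) ^ n) • m₀) := by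
          rw [← mul_smul, ← pow_add]
          congr 2
          omega
        rw [e2, e1, smul_neg, Finset.smul_sum]
        refine N₀.neg_mem (Submodule.sum_mem _ fun i _ => ?_)
        have e3 : ((X : Polynomial B) ^ (k - n)) • ((C (algebraMap A B (z i)) * X ^ (i : ℕ)) • m₀)
            = (algebraMap A B (z i)) • (((X : Polynomial B) ^ (k - n + (i : ℕ))) • m₀) := by
          rw [hsmul, ← mul_smul, ← mul_smul]
          congr 1
          rw [X_pow_mul, mul_assoc, ← pow_add, add_comm ((i : ℕ)) (k - n)]
        rw [e3]
        exact N₀.smul_mem _ (ih _ (by omega))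
  have hB : ∀ x : M, x ∈ N₀ := by
    have hall : ∀ p : Polynomial B, p • m₀ ∈ N₀ := by
      intro p
      induction p using Polynomial.induction_on' with
      | add p q hp hq => rw [add_smul]; exact N₀.add_mem hp hq
      | monomial k b =>
        rw [← C_mul_X_pow_eq_monomial, mul_smul, ← hsmul]
        exact N₀.smul_mem _ (hA k)
    intro x
    have hspan : Submodule.span (Polynomial B) {m₀} = ⊤ := by
      obtain h | h := eq_bot_or_eq_top (Submodule.span (Polynomial B) {m₀})
      · exfalso
        have : m₀ ∈ Submodule.span (Polynomial B) {m₀} := Submodule.mem_span_singleton_self _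
        rw [h] at this
        exact hm₀ne ((Submodule.mem_bot _).1 this)
      · exact h
    have : x ∈ Submodule.span (Polynomial B) {m₀} := by rw [hspan]; exact Submodule.mem_top
    obtain ⟨p, hp⟩ := Submodule.mem_span_singleton.1 this
    rw [← hp]
    exact hall p
  -- Nakayama-style descent
  have nak : ∀ l : List M, (∀ x : M, x ∈ Submodule.span B {y | y ∈ l}) → False := by
    intro l
    induction l with
    | nil =>
      intro hl
      have h0 := hl m₀
      rw [show {y | y ∈ ([] : List M)} = (∅ : Set M) by simp, Submodule.span_empty] at h0
      exact hm₀ne ((Submodule.mem_bot _).1 h0)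
    | cons m₁ t iht =>
      intro hl
      have hset : {y | y ∈ m₁ :: t} = insert m₁ {y | y ∈ t} := by
        ext y; simp [List.mem_cons]
      obtain ⟨lj, hlj, hm₁⟩ := hs m₁
      have key : ∀ l' : List (B × M), (∀ q ∈ l', q.1 ∈ Jset) →
          ∃ c w, c ∈ Jset ∧ w ∈ Submodule.span B {y | y ∈ t} ∧
            (l'.map fun q => q.1 • q.2).sum = c • m₁ + w := by
        intro l' hl'
        induction l' with
        | nil => exact ⟨0, 0, hJ0, Submodule.zero_mem _, by simp⟩
        | cons q l'' ihl =>
          obtain ⟨c', w', hc', hw', hsum⟩ := ihl fun q' hq' => hl' q' (List.mem_cons_of_mem _ hq')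
          have hq2 : q.2 ∈ Submodule.span B (insert m₁ {y | y ∈ t}) := by
            rw [← hset]; exact hl q.2
          obtain ⟨d, w₂, hw₂, hq2e⟩ := Submodule.mem_span_insert.1 hq2
          refine ⟨q.1 * d + c', q.1 • w₂ + w', hJadd _ _ (hJmulR _ _ (hl' q List.mem_cons_self)) hc',
            Submodule.add_mem _ (Submodule.smul_mem _ _ hw₂) hw', ?_⟩
          rw [List.map_cons, List.sum_cons, hsum, hq2e, smul_add, add_smul, mul_smul]
          abel
      obtain ⟨c, w, hc, hw, hsum⟩ := key lj hlj
      obtain ⟨u, hu⟩ := aux_quasiReg c hc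
      have hm₁t : m₁ ∈ Submodule.span B {y | y ∈ t} := by
        have h7 : m₁ = c • m₁ + w := hm₁.trans hsum
        have h5 : (1 - c) • m₁ = w := by
          rw [sub_smul, one_smul]
          nth_rewrite 1 [h7]
          abel
        have h6 : m₁ = u • w := by
          rw [← h5, ← mul_smul, hu, one_smul]
        rw [h6]
        exact Submodule.smul_mem _ _ hw
      refine iht fun x => ?_
      have := hl x
      rw [hset, Submodule.span_insert_eq_span hm₁t] at this
      exact this
  refine nak (List.ofFn fun i : Fin n => ((X : Polynomial B) ^ (i : ℕ)) • m₀) fun x => ?_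
  have hseteq : {y | y ∈ List.ofFn fun i : Fin n => ((X : Polynomial B) ^ (i : ℕ)) • m₀}
      = Set.range fun i : Fin n => ((X : Polynomial B) ^ (i : ℕ)) • m₀ := by
    ext y; simp [List.mem_ofFn]
  rw [hseteq]
  exact hB x

/-- Under condition (E), an element killing all simple `B`-modules is nilpotent. -/
lemma aux_nilpotent
    (hE : ∀ (M : Type) [AddCommGroup M] [Module (Polynomial B) M],
      IsSimpleModule (Polynomial B) M →
      ∃ n : ℕ, 1 ≤ n ∧ ∃ z : Fin n → A, ∀ m : M,
        ((X : Polynomial B) ^ n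
          + ∑ i : Fin n, C (algebraMap A B (z i)) * X ^ (i : ℕ)) • m = 0)
    (a : B)
    (ha : ∀ (M : Type) [AddCommGroup M] [Module B M],
        IsSimpleModule B M → ∀ m : M, a • m = 0) :
    IsNilpotent a := by
  have hkp := aux_kills_poly_simple hE a ha
  have hinv : ∃ u : Polynomial B, u * (1 - C a * X) = 1 := by
    by_contra h
    push_neg at h
    have h1 : Ideal.span {(1 : Polynomial B) - C a * X} ≠ ⊤ := by
      intro ht
      have h2 : (1 : Polynomial B) ∈ Ideal.span {(1 : Polynomial B) - C a * X} := by
        rw [ht]; exact Submodule.mem_top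
      obtain ⟨u, hu⟩ := Submodule.mem_span_singleton.1 h2
      exact h u (by simpa [smul_eq_mul] using hu)
    obtain ⟨L, hL, hle⟩ := Ideal.exists_le_maximal _ h1
    haveI hsimp : IsSimpleModule (Polynomial B) (Polynomial B ⧸ L) :=
      isSimpleModule_iff_isCoatom.2 hL.out
    have h2 := hkp (Polynomial B ⧸ L) hsimp (Submodule.Quotient.mk (1 : Polynomial B))
    have hCa : (C a : Polynomial B) ∈ L := by
      have h3 : (Submodule.Quotient.mk ((C a : Polynomial B) • (1 : Polynomial B)) :
          Polynomial B ⧸ L) = 0 := by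
        rw [Submodule.Quotient.mk_smul]; exact h2
      rw [smul_eq_mul, mul_one] at h3
      exact (Submodule.Quotient.mk_eq_zero _).1 h3
    have hCaX : (C a * X : Polynomial B) ∈ L := by
      have h4 := L.smul_mem X hCa
      rwa [smul_eq_mul, X_mul] at h4
    have h1L : (1 : Polynomial B) ∈ L := by
      have := L.add_mem (hle (Ideal.subset_span rfl)) hCaX
      simpa using this
    exact hL.ne_top ((Ideal.eq_top_iff_one _).2 h1L)
  obtain ⟨u, hu⟩ := hinv
  have hueq : u = 1 + u * C a * X := by
    have h5 : u * 1 - u * (C a * X) = 1 := by rw [← mul_sub]; exact hu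
    rw [mul_one] at h5
    have := eq_add_of_sub_eq h5
    rwa [← mul_assoc] at this
  have hco : ∀ k : ℕ, u.coeff k = a ^ k := by
    intro k
    induction k with
    | zero =>
      conv_lhs => rw [hueq]
      rw [coeff_add, coeff_one, mul_coeff_zero, coeff_X_zero]
      simp
    | succ k ih =>
      conv_lhs => rw [hueq]
      rw [coeff_add, coeff_mul_X, coeff_mul_C, ih, coeff_one]
      simp [pow_succ]
  exact ⟨u.natDegree + 1, by
    rw [← hco]
    exact Polynomial.coeff_eq_zero_of_natDegree_lt (Nat.lt_succ_self _)⟩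

end Aux

/-- Let `A` be a commutative ring and `B` a left noetherian `A`-algebra satisfying
condition (E): for every simple left `B[X]`-module `M`, the endomorphism `φ(m) = X • m`
is integral over `A`, i.e. there are `n ≥ 1` and `z₀, …, z_{n-1} ∈ A` with
`φⁿ + z_{n-1}φ^{n-1} + ⋯ + z₀ = 0` on `M` (where `A` acts on `M` through
`A → B → B[X]`).  Then the Jacobson radical of `B` (the intersection of the
annihilators of all simple left `B`-modules) equals the Baer radical of `B`
(the intersection of all prime two-sided ideals). -/
theorem jacobson_eq_baer_of_condition_E (A B : Type) [CommRing A] [Ring B] [Algebra A B]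
    [IsNoetherianRing B]
    (hE : ∀ (M : Type) [AddCommGroup M] [Module (Polynomial B) M],
      IsSimpleModule (Polynomial B) M →
      ∃ n : ℕ, 1 ≤ n ∧ ∃ z : Fin n → A, ∀ m : M,
        ((X : Polynomial B) ^ n
          + ∑ i : Fin n, C (algebraMap A B (z i)) * X ^ (i : ℕ)) • m = 0) :
    ∀ a : B,
      (∀ (M : Type) [AddCommGroup M] [Module B M],
        IsSimpleModule B M → ∀ m : M, a • m = 0)
      ↔ (∀ P : TwoSidedIdeal B, P.IsPrimeIdeal → a ∈ P) := by
  intro a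
  constructor
  · -- Jacobson ⊆ Baer
    intro ha P hP
    classical
    set Jset : Set B := {c | ∀ (N : Type) [AddCommGroup N] [Module B N],
      IsSimpleModule B N → ∀ x : N, c • x = 0} with hJset
    have haJ : a ∈ Jset := ha
    have hJmulR : ∀ c b : B, c ∈ Jset → c * b ∈ Jset := by
      intro c b hc N _ _ hN x
      rw [mul_smul, hc N hN _]
    have hJmulL : ∀ b c : B, c ∈ Jset → b * c ∈ Jset := by
      intro b c hc N _ _ hN x
      rw [mul_smul, hc N hN _, smul_zero]
    have hnil : ∀ c ∈ Jset, IsNilpotent c := fun c hc => aux_nilpotent hE c hc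
    by_contra haP
    let lP : B → Ideal B := fun c =>
      { carrier := {y | y * c ∈ P}
        add_mem' := fun {y₁ y₂} h1 h2 => by
          simp only [Set.mem_setOf_eq] at h1 h2 ⊢
          rw [add_mul]; exact P.add_mem h1 h2
        zero_mem' := by
          simp only [Set.mem_setOf_eq, zero_mul]; exact P.zero_mem
        smul_mem' := fun x y hy => by
          simp only [Set.mem_setOf_eq, smul_eq_mul] at hy ⊢
          rw [mul_assoc]; exact P.mul_mem_left _ _ hy }
    have hlP : ∀ c y : B, y ∈ lP c ↔ y * c ∈ P := fun _ _ => Iff.rfl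
    have hFam := set_has_maximal_iff_noetherian.mpr (inferInstance : IsNoetherian B B)
      {I : Ideal B | ∃ c, c ∈ Jset ∧ c ∉ P ∧ I = lP c} ⟨lP a, a, haJ, haP, rfl⟩
    obtain ⟨I, ⟨a₀, ha₀J, ha₀P, rfl⟩, hmax⟩ := hFam
    -- key claim: a₀ * x * a₀ ∈ P for all x
    have hc : ∀ x : B, a₀ * x * a₀ ∈ P := by
      by_contra hx
      push_neg at hx
      obtain ⟨x, hxP⟩ := hx
      obtain ⟨mnil, hmnil⟩ := hnil _ (hJmulR a₀ x ha₀J)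
      have hm1 : 1 ≤ mnil := by
        by_contra hmm
        push_neg at hmm
        interval_cases mnil
        rw [pow_zero] at hmnil
        refine ha₀P ?_
        have h0 : a₀ = 0 := by
          calc a₀ = 1 * a₀ := (one_mul _).symm
          _ = 0 * a₀ := by rw [hmnil]
          _ = 0 := zero_mul _
        rw [h0]; exact P.zero_mem
      set prop : ℕ → Prop := fun k => (a₀ * x) ^ k * a₀ ∉ P with hpropdef
      have hprop1 : prop 1 := by rw [hpropdef]; simpa [pow_one] using hxP
      set k := Nat.findGreatest prop mnil with hkdef
      have hk1 : 1 ≤ k := Nat.le_findGreatest hm1 hprop1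
      have hkm : k ≤ mnil := Nat.findGreatest_le mnil
      have hpk : prop k := Nat.findGreatest_spec hm1 hprop1
      have hkltm : k < mnil := by
        rcases lt_or_eq_of_le hkm with h | h
        · exact h
        · exfalso
          apply hpk
          rw [h, hmnil, zero_mul]
          exact P.zero_mem
      have hk1m : (a₀ * x) ^ (k + 1) * a₀ ∈ P := by
        by_contra hgg
        exact Nat.findGreatest_is_greatest (Nat.lt_succ_self k) hkltm hgg
      have hb : a₀ * (x * a₀) ^ k = (a₀ * x) ^ k * a₀ :=
        (SemiconjBy.pow_right (by simp [SemiconjBy, mul_assoc]) k)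
      have hbJ : (a₀ * x) ^ k * a₀ ∈ Jset := by
        rw [← hb]; exact hJmulR _ _ ha₀J
      have hbP : (a₀ * x) ^ k * a₀ ∉ P := hpk
      have hle1 : lP a₀ ≤ lP ((a₀ * x) ^ k * a₀) := by
        intro y hy
        rw [hlP] at hy ⊢
        rw [← hb, ← mul_assoc]
        exact P.mul_mem_right _ _ hy
      have heq : lP ((a₀ * x) ^ k * a₀) = lP a₀ := by
        by_contra hne
        exact hmax (lP ((a₀ * x) ^ k * a₀)) ⟨_, hbJ, hbP, rfl⟩
          (lt_of_le_of_ne hle1 fun h => hne h.symm)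
      have hax : a₀ * x ∈ lP ((a₀ * x) ^ k * a₀) := by
        rw [hlP]
        have he : (a₀ * x) * ((a₀ * x) ^ k * a₀) = (a₀ * x) ^ (k + 1) * a₀ := by
          rw [← mul_assoc, ← pow_succ']
        rw [he]
        exact hk1m
      rw [heq, hlP] at hax
      exact hxP hax
    -- the two-sided ideal generated by a₀ squares into P
    set S : Set B := {w | ∃ x y : B, w = x * a₀ * y} with hS
    set D₀ : AddSubgroup B := AddSubgroup.closure S with hD₀
    have hDmulL : ∀ r w : B, w ∈ D₀ → r * w ∈ D₀ := by
      intro r w hw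
      refine AddSubgroup.closure_induction ?_ ?_ ?_ ?_ hw
      · rintro w ⟨x, y, rfl⟩
        exact AddSubgroup.subset_closure ⟨r * x, y, by rw [mul_assoc, mul_assoc, mul_assoc]⟩
      · rw [mul_zero]; exact D₀.zero_mem
      · intro w₁ w₂ _ _ h1 h2
        rw [mul_add]; exact D₀.add_mem h1 h2
      · intro w₁ _ h1
        rw [mul_neg]; exact D₀.neg_mem h1
    have hDmulR : ∀ w r : B, w ∈ D₀ → w * r ∈ D₀ := by
      intro w r hw
      refine AddSubgroup.closure_induction ?_ ?_ ?_ ?_ hw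
      · rintro w ⟨x, y, rfl⟩
        exact AddSubgroup.subset_closure ⟨x, y * r, by rw [mul_assoc (x * a₀) y r]⟩
      · rw [zero_mul]; exact D₀.zero_mem
      · intro w₁ w₂ _ _ h1 h2
        rw [add_mul]; exact D₀.add_mem h1 h2
      · intro w₁ _ h1
        rw [neg_mul]; exact D₀.neg_mem h1
    set D : TwoSidedIdeal B := TwoSidedIdeal.mk' D₀ D₀.zero_mem
      (fun h1 h2 => D₀.add_mem h1 h2) (fun h1 => D₀.neg_mem h1)
      (fun {r w} hw => hDmulL r w hw) (fun {w r} hw => hDmulR w r hw) with hD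
    have hmemD : ∀ w : B, w ∈ D ↔ w ∈ D₀ := fun w =>
      TwoSidedIdeal.mem_mk' _ _ _ _ _ _ w
    have hprod : ∀ u ∈ D₀, ∀ v ∈ D₀, u * v ∈ P := by
      intro u hu
      refine AddSubgroup.closure_induction ?_ ?_ ?_ ?_ hu
      · rintro u ⟨x, y, rfl⟩ v hv
        refine AddSubgroup.closure_induction ?_ ?_ ?_ ?_ hv
        · rintro v ⟨x', y', rfl⟩
          have he : x * a₀ * y * (x' * a₀ * y') = x * (a₀ * (y * x') * a₀) * y' := by
            simp only [mul_assoc]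
          rw [he]
          exact P.mul_mem_right _ _ (P.mul_mem_left _ _ (hc _))
        · rw [mul_zero]; exact P.zero_mem
        · intro v₁ v₂ _ _ h1 h2
          rw [mul_add]; exact P.add_mem h1 h2
        · intro v₁ _ h1
          rw [mul_neg]; exact P.neg_mem h1
      · intro v hv
        rw [zero_mul]; exact P.zero_mem
      · intro u₁ u₂ _ _ h1 h2 v hv
        rw [add_mul]; exact P.add_mem (h1 v hv) (h2 v hv)
      · intro u₁ _ h1 v hv
        rw [neg_mul]; exact P.neg_mem (h1 v hv)
    have ha₀D : a₀ ∈ D := (hmemD a₀).2 <| AddSubgroup.subset_closure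
      ⟨1, 1, by rw [one_mul, mul_one]⟩
    rcases hP.2 D D (fun u hu v hv => hprod u ((hmemD u).1 hu) v ((hmemD v).1 hv)) with h | h
    · exact ha₀P (h ha₀D)
    · exact ha₀P (h ha₀D)
  · -- Baer ⊆ Jacobson
    intro hPa M _ _ hM m
    classical
    set Ann : TwoSidedIdeal B := TwoSidedIdeal.mk' {c : B | ∀ x : M, c • x = 0}
      (by intro x; simp)
      (by intro c d hc hd x; rw [add_smul, hc x, hd x, add_zero])
      (by intro c hc x; rw [neg_smul, hc x, neg_zero])
      (by intro b c hc x; rw [mul_smul, hc x, smul_zero])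
      (by intro c b hc x; rw [mul_smul, hc (b • x)]) with hAnn
    have hmemAnn : ∀ c : B, c ∈ Ann ↔ ∀ x : M, c • x = 0 := fun c =>
      TwoSidedIdeal.mem_mk' _ _ _ _ _ _ c
    haveI := hM
    haveI : Nontrivial M := IsSimpleModule.nontrivial B M
    have hprime : Ann.IsPrimeIdeal := by
      constructor
      · intro htop
        obtain ⟨x, y, hxy⟩ := exists_pair_ne M
        have h1 : (1 : B) ∈ Ann := by rw [htop]; exact TwoSidedIdeal.mem_top B
        rw [hmemAnn] at h1
        exact hxy (by rw [← one_smul B x, ← one_smul B y, h1 x, h1 y])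
      · intro J₁ J₂ h12
        by_cases h2 : J₂ ≤ Ann
        · exact Or.inr h2
        · left
          rw [SetLike.le_def] at h2
          push_neg at h2
          obtain ⟨c, hcJ₂, hcAnn⟩ := h2
          rw [hmemAnn] at hcAnn
          push_neg at hcAnn
          obtain ⟨m₂, hm₂⟩ := hcAnn
          set K : Submodule B M :=
            { carrier := {x | ∀ b ∈ J₁, b • x = 0}
              add_mem' := fun {x y} hx hy b hb => by
                rw [smul_add, hx b hb, hy b hb, add_zero]
              zero_mem' := fun b _ => smul_zero b
              smul_mem' := fun r x hx b hb => by
                rw [← mul_smul]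
                exact hx (b * r) (J₁.mul_mem_right b r hb) } with hK
          have hKne : K ≠ ⊥ := by
            intro hbot
            have hcm₂ : c • m₂ ∈ K := by
              intro b hb
              rw [← mul_smul]
              exact (hmemAnn (b * c)).1 (h12 b hb c hcJ₂) m₂
            rw [hbot] at hcm₂
            exact hm₂ ((Submodule.mem_bot B).1 hcm₂)
          have hKtop : K = ⊤ := (eq_bot_or_eq_top K).resolve_left hKne
          intro b hb
          rw [hmemAnn]
          intro x
          have hx : x ∈ K := by rw [hKtop]; exact Submodule.mem_top
          exact hx b hb
    exact (hmemAnn a).1 (hPa Ann hprime) m
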